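/- arXiv:2203.11672 — 2 statements merged into one kernel-verified Lean document; each statement's English description precedes it below -/
import Mathlib

section
/- There exist ℂ-linear isomorphisms intertwining the S- and T-actions between the paired subspaces of P₂: the linear map V₀⁺ → V₂⁺ sending x₀²+x₃² ↦ x₂x₄+x₅x₁, x₁²+x₄² ↦ x₃x₅+x₀x₂, x₂²+x₅² ↦ x₄x₀+x₁x₃ commutes with S and with T; the linear map V₀⁻ → V₂⁻ sending x₀²−x₃² ↦ x₂x₄−x₅x₁, x₁²−x₄² ↦ x₃x₅−x₀x₂, x₂²−x₅² ↦ x₄x₀−x₁x₃ commutes with S and with T; and the linear map V₁⁺ → V₃ sending x₀x₁+x₃x₄ ↦ x₂x₅, x₁x₂+x₄x₅ ↦ x₃x₀, x₂x₃+x₅x₀ ↦ x₄x₁ commutes with S and with T. -/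
open MvPolynomial

noncomputable section

abbrev R6 : Type := MvPolynomial (Fin 6) ℂ

/-- `ε = exp(2πi/6)`, a primitive 6th root of unity. -/
def ε : ℂ := Complex.exp (2 * Real.pi * Complex.I / 6)

/-- The Heisenberg generator `S`, the `ℂ`-algebra map with `S xᵢ = x_{i+1 mod 6}`. -/
def Sh : R6 →ₐ[ℂ] R6 := aeval fun i : Fin 6 => X (i + 1)

/-- The Heisenberg generator `T`, the `ℂ`-algebra map with `T xᵢ = εⁱ xᵢ`. -/
def Tw : R6 →ₐ[ℂ] R6 := aeval fun i : Fin 6 => C (ε ^ (i : ℕ)) * X i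

def V0p : Submodule ℂ R6 :=
  Submodule.span ℂ {X 0 ^ 2 + X 3 ^ 2, X 1 ^ 2 + X 4 ^ 2, X 2 ^ 2 + X 5 ^ 2}
def V0m : Submodule ℂ R6 :=
  Submodule.span ℂ {X 0 ^ 2 - X 3 ^ 2, X 1 ^ 2 - X 4 ^ 2, X 2 ^ 2 - X 5 ^ 2}
def V1p : Submodule ℂ R6 :=
  Submodule.span ℂ {X 0 * X 1 + X 3 * X 4, X 1 * X 2 + X 4 * X 5, X 2 * X 3 + X 5 * X 0}
def V2p : Submodule ℂ R6 :=
  Submodule.span ℂ {X 0 * X 2 + X 3 * X 5, X 1 * X 3 + X 4 * X 0, X 2 * X 4 + X 5 * X 1}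
def V2m : Submodule ℂ R6 :=
  Submodule.span ℂ {X 0 * X 2 - X 3 * X 5, X 1 * X 3 - X 4 * X 0, X 2 * X 4 - X 5 * X 1}
def V3 : Submodule ℂ R6 :=
  Submodule.span ℂ {X 0 * X 3, X 1 * X 4, X 2 * X 5}

/-- A linear map `φ` realizes a `ℂ`-linear isomorphism from `V` onto `W`, intertwining the
`S`- and `T`-actions. -/
def IsEquivariantIso (φ : R6 →ₗ[ℂ] R6) (V W : Submodule ℂ R6) : Prop :=
  Submodule.map φ V = W ∧ (∀ v ∈ V, φ v = 0 → v = 0) ∧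
    (∀ v ∈ V, φ (Sh v) = Sh (φ v)) ∧ (∀ v ∈ V, φ (Tw v) = Tw (φ v))

/-! ### Auxiliary machinery -/

def pd (i : Fin 6) : R6 →ₗ[ℂ] R6 := (pderiv i).toLinearMap

lemma pd_two (i : Fin 6) : pderiv i (2 : R6) = 0 := by
  simpa using (pderiv i).map_natCast 2

lemma htwo (a : R6) : (2:ℂ)⁻¹ • (a * 2) = a := by
  rw [show (2:R6) = C 2 from (map_ofNat C 2).symm, smul_eq_C_mul]
  have h : (C ((2:ℂ)⁻¹) : R6) * C 2 = 1 := by rw [← C_mul]; norm_num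
  linear_combination (a : R6) * h

def phi1 : R6 →ₗ[ℂ] R6 :=
  (1/2 : ℂ) • ∑ i : Fin 6,
    LinearMap.mulLeft ℂ (X (i+2) * X (i+4)) ∘ₗ pd i ∘ₗ pd i

def psi1 : R6 →ₗ[ℂ] R6 :=
  ∑ i : Fin 6,
    LinearMap.mulLeft ℂ (X i ^ 2) ∘ₗ pd (i+4) ∘ₗ pd (i+2)

def phi2 : R6 →ₗ[ℂ] R6 :=
  (1/2 : ℂ) • ∑ i : Fin 6,
    LinearMap.mulLeft ℂ (X (i+2) * X (i+5)) ∘ₗ pd (i+1) ∘ₗ pd i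

def psi2 : R6 →ₗ[ℂ] R6 :=
  ∑ i : Fin 6,
    LinearMap.mulLeft ℂ (X i * X (i+1)) ∘ₗ pd (i+5) ∘ₗ pd (i+2)

lemma a0 : phi1 (X 0 ^ 2) = X 2 * X 4 := by
  simp [phi1, pd, Fin.sum_univ_six, pderiv_X_self, pderiv_X_of_ne, pd_two, ← mul_assoc, htwo]
lemma a1 : phi1 (X 1 ^ 2) = X 3 * X 5 := by
  simp [phi1, pd, Fin.sum_univ_six, pderiv_X_self, pderiv_X_of_ne, pd_two, ← mul_assoc, htwo]
lemma a2 : phi1 (X 2 ^ 2) = X 4 * X 0 := by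
  simp [phi1, pd, Fin.sum_univ_six, pderiv_X_self, pderiv_X_of_ne, pd_two, ← mul_assoc, htwo]
lemma a3 : phi1 (X 3 ^ 2) = X 5 * X 1 := by
  simp [phi1, pd, Fin.sum_univ_six, pderiv_X_self, pderiv_X_of_ne, pd_two, ← mul_assoc, htwo]
lemma a4 : phi1 (X 4 ^ 2) = X 0 * X 2 := by
  simp [phi1, pd, Fin.sum_univ_six, pderiv_X_self, pderiv_X_of_ne, pd_two, ← mul_assoc, htwo]
lemma a5 : phi1 (X 5 ^ 2) = X 1 * X 3 := by
  simp [phi1, pd, Fin.sum_univ_six, pderiv_X_self, pderiv_X_of_ne, pd_two, ← mul_assoc, htwo]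

lemma b0 : psi1 (X 2 * X 4) = X 0 ^ 2 := by
  simp [psi1, pd, Fin.sum_univ_six, pderiv_X_self, pderiv_X_of_ne, pderiv_mul]
lemma b1 : psi1 (X 5 * X 1) = X 3 ^ 2 := by
  simp [psi1, pd, Fin.sum_univ_six, pderiv_X_self, pderiv_X_of_ne, pderiv_mul]
lemma b2 : psi1 (X 3 * X 5) = X 1 ^ 2 := by
  simp [psi1, pd, Fin.sum_univ_six, pderiv_X_self, pderiv_X_of_ne, pderiv_mul]
lemma b3 : psi1 (X 0 * X 2) = X 4 ^ 2 := by
  simp [psi1, pd, Fin.sum_univ_six, pderiv_X_self, pderiv_X_of_ne, pderiv_mul]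
lemma b4 : psi1 (X 4 * X 0) = X 2 ^ 2 := by
  simp [psi1, pd, Fin.sum_univ_six, pderiv_X_self, pderiv_X_of_ne, pderiv_mul]
lemma b5 : psi1 (X 1 * X 3) = X 5 ^ 2 := by
  simp [psi1, pd, Fin.sum_univ_six, pderiv_X_self, pderiv_X_of_ne, pderiv_mul]

lemma c0 : phi2 (X 0 * X 1) = (2:ℂ)⁻¹ • (X 2 * X 5) := by
  simp [phi2, pd, Fin.sum_univ_six, pderiv_X_self, pderiv_X_of_ne, pderiv_mul]
lemma c1 : phi2 (X 1 * X 2) = (2:ℂ)⁻¹ • (X 3 * X 0) := by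
  simp [phi2, pd, Fin.sum_univ_six, pderiv_X_self, pderiv_X_of_ne, pderiv_mul]
lemma c2 : phi2 (X 2 * X 3) = (2:ℂ)⁻¹ • (X 4 * X 1) := by
  simp [phi2, pd, Fin.sum_univ_six, pderiv_X_self, pderiv_X_of_ne, pderiv_mul]
lemma c3 : phi2 (X 3 * X 4) = (2:ℂ)⁻¹ • (X 2 * X 5) := by
  simp [phi2, pd, Fin.sum_univ_six, pderiv_X_self, pderiv_X_of_ne, pderiv_mul]
  ring
lemma c4 : phi2 (X 4 * X 5) = (2:ℂ)⁻¹ • (X 3 * X 0) := by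
  simp [phi2, pd, Fin.sum_univ_six, pderiv_X_self, pderiv_X_of_ne, pderiv_mul]
  ring
lemma c5 : phi2 (X 5 * X 0) = (2:ℂ)⁻¹ • (X 4 * X 1) := by
  simp [phi2, pd, Fin.sum_univ_six, pderiv_X_self, pderiv_X_of_ne, pderiv_mul]
  ring

lemma d0 : psi2 (X 2 * X 5) = X 0 * X 1 + X 3 * X 4 := by
  simp [psi2, pd, Fin.sum_univ_six, pderiv_X_self, pderiv_X_of_ne, pderiv_mul]
lemma d1 : psi2 (X 3 * X 0) = X 1 * X 2 + X 4 * X 5 := by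
  simp [psi2, pd, Fin.sum_univ_six, pderiv_X_self, pderiv_X_of_ne, pderiv_mul]
lemma d2 : psi2 (X 4 * X 1) = X 2 * X 3 + X 5 * X 0 := by
  simp [psi2, pd, Fin.sum_univ_six, pderiv_X_self, pderiv_X_of_ne, pderiv_mul]

lemma hε6 : ε ^ 6 = 1 := by
  rw [ε, ← Complex.exp_nat_mul]
  rw [show ((6:ℕ) : ℂ) * (2 * Real.pi * Complex.I / 6) = 2 * Real.pi * Complex.I by
    push_cast; ring]
  exact Complex.exp_two_pi_mul_I

lemma hε7 : ε ^ 7 = ε := by linear_combination ε * hε6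
lemma hε8 : ε ^ 8 = ε ^ 2 := by linear_combination (ε^2) * hε6
lemma hε9 : ε ^ 9 = ε ^ 3 := by linear_combination (ε^3) * hε6
lemma hε10 : ε ^ 10 = ε ^ 4 := by linear_combination (ε^4) * hε6
lemma hε11 : ε ^ 11 = ε ^ 5 := by linear_combination (ε^5) * hε6

lemma sh0 : Sh (X 0) = X 1 := by simp [Sh]
lemma sh1 : Sh (X 1) = X 2 := by simp [Sh]
lemma sh2 : Sh (X 2) = X 3 := by simp [Sh]
lemma sh3 : Sh (X 3) = X 4 := by simp [Sh]
lemma sh4 : Sh (X 4) = X 5 := by simp [Sh]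
lemma sh5 : Sh (X 5) = X 0 := by simp [Sh]

lemma tw0 : Tw (X 0) = (ε ^ 0) • X 0 := by simp [Tw, smul_eq_C_mul]; try rfl
lemma tw1 : Tw (X 1) = (ε ^ 1) • X 1 := by simp [Tw, smul_eq_C_mul]; try rfl
lemma tw2 : Tw (X 2) = (ε ^ 2) • X 2 := by simp [Tw, smul_eq_C_mul]; try rfl
lemma tw3 : Tw (X 3) = (ε ^ 3) • X 3 := by simp [Tw, smul_eq_C_mul]; try rfl
lemma tw4 : Tw (X 4) = (ε ^ 4) • X 4 := by simp [Tw, smul_eq_C_mul]; try rfl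
lemma tw5 : Tw (X 5) = (ε ^ 5) • X 5 := by simp [Tw, smul_eq_C_mul]; try rfl


lemma eA0 : phi1 (X 0 ^ 2 + X 3 ^ 2) = X 2 * X 4 + X 5 * X 1 := by rw [map_add, a0, a3]
lemma eA1 : phi1 (X 1 ^ 2 + X 4 ^ 2) = X 3 * X 5 + X 0 * X 2 := by rw [map_add, a1, a4]
lemma eA2 : phi1 (X 2 ^ 2 + X 5 ^ 2) = X 4 * X 0 + X 1 * X 3 := by rw [map_add, a2, a5]

lemma imgA : Submodule.map phi1 V0p = V2p := by
  rw [V0p, V2p, Submodule.map_span]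
  refine le_antisymm (Submodule.span_le.2 ?_) (Submodule.span_le.2 ?_)
  · rintro x ⟨y, hy, rfl⟩
    simp only [Set.mem_insert_iff, Set.mem_singleton_iff] at hy
    rcases hy with rfl | rfl | rfl
    · rw [eA0]
      exact Submodule.subset_span (by right; right; rfl)
    · rw [eA1]
      exact Submodule.subset_span (by left; ring)
    · rw [eA2]
      exact Submodule.subset_span (by right; left; ring)
  · intro x hx
    simp only [Set.mem_insert_iff, Set.mem_singleton_iff] at hx
    rcases hx with rfl | rfl | rfl
    · have h : (X 0 * X 2 + X 3 * X 5 : R6) = phi1 (X 1 ^ 2 + X 4 ^ 2) := by rw [eA1]; ring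
      rw [h]
      exact Submodule.subset_span ⟨_, by simp, rfl⟩
    · have h : (X 1 * X 3 + X 4 * X 0 : R6) = phi1 (X 2 ^ 2 + X 5 ^ 2) := by rw [eA2]; ring
      rw [h]
      exact Submodule.subset_span ⟨_, by simp, rfl⟩
    · have h : (X 2 * X 4 + X 5 * X 1 : R6) = phi1 (X 0 ^ 2 + X 3 ^ 2) := by rw [eA0]
      rw [h]
      exact Submodule.subset_span ⟨_, by simp, rfl⟩

lemma injA : ∀ v ∈ V0p, phi1 v = 0 → v = 0 := by
  intro v hv h0
  have key : (psi1 ∘ₗ phi1) v = (LinearMap.id : R6 →ₗ[ℂ] R6) v := by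
    refine LinearMap.eqOn_span ?_ hv
    intro x hx
    simp only [Set.mem_insert_iff, Set.mem_singleton_iff] at hx
    rcases hx with rfl | rfl | rfl <;>
      simp only [LinearMap.comp_apply, LinearMap.id_apply, map_add,
        a0, a1, a2, a3, a4, a5, b0, b1, b2, b3, b4, b5]
  simpa [h0] using key.symm

lemma shA : ∀ v ∈ V0p, phi1 (Sh v) = Sh (phi1 v) := by
  intro v hv
  have key : (phi1 ∘ₗ Sh.toLinearMap) v = (Sh.toLinearMap ∘ₗ phi1) v := by
    refine LinearMap.eqOn_span ?_ hv
    intro x hx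
    simp only [Set.mem_insert_iff, Set.mem_singleton_iff] at hx
    rcases hx with rfl | rfl | rfl <;>
      simp only [LinearMap.comp_apply, AlgHom.toLinearMap_apply, map_add, map_pow, map_mul,
        sh0, sh1, sh2, sh3, sh4, sh5, a0, a1, a2, a3, a4, a5]
  simpa using key

lemma twA : ∀ v ∈ V0p, phi1 (Tw v) = Tw (phi1 v) := by
  intro v hv
  have key : (phi1 ∘ₗ Tw.toLinearMap) v = (Tw.toLinearMap ∘ₗ phi1) v := by
    refine LinearMap.eqOn_span ?_ hv
    intro x hx
    simp only [Set.mem_insert_iff, Set.mem_singleton_iff] at hx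
    rcases hx with rfl | rfl | rfl <;>
    · simp only [LinearMap.comp_apply, AlgHom.toLinearMap_apply, map_add, map_pow, map_mul,
        map_smul, tw0, tw1, tw2, tw3, tw4, tw5, smul_pow, smul_mul_assoc, mul_smul_comm,
        smul_smul, a0, a1, a2, a3, a4, a5]
      match_scalars
      all_goals ring_nf
      all_goals try simp only [hε6, hε7, hε8, hε9, hε10, hε11]
      all_goals try ring
  simpa using key
lemma eB0 : phi1 (X 0 ^ 2 - X 3 ^ 2) = X 2 * X 4 - X 5 * X 1 := by rw [map_sub, a0, a3]
lemma eB1 : phi1 (X 1 ^ 2 - X 4 ^ 2) = X 3 * X 5 - X 0 * X 2 := by rw [map_sub, a1, a4]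
lemma eB2 : phi1 (X 2 ^ 2 - X 5 ^ 2) = X 4 * X 0 - X 1 * X 3 := by rw [map_sub, a2, a5]

lemma imgB : Submodule.map phi1 V0m = V2m := by
  rw [V0m, V2m, Submodule.map_span]
  refine le_antisymm (Submodule.span_le.2 ?_) (Submodule.span_le.2 ?_)
  · rintro x ⟨y, hy, rfl⟩
    simp only [Set.mem_insert_iff, Set.mem_singleton_iff] at hy
    rcases hy with rfl | rfl | rfl
    · rw [eB0]
      exact Submodule.subset_span (by right; right; rfl)
    · rw [eB1, show (X 3 * X 5 - X 0 * X 2 : R6) = -(X 0 * X 2 - X 3 * X 5) by ring]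
      exact neg_mem (Submodule.subset_span (by left; rfl))
    · rw [eB2, show (X 4 * X 0 - X 1 * X 3 : R6) = -(X 1 * X 3 - X 4 * X 0) by ring]
      exact neg_mem (Submodule.subset_span (by right; left; rfl))
  · intro x hx
    simp only [Set.mem_insert_iff, Set.mem_singleton_iff] at hx
    rcases hx with rfl | rfl | rfl
    · rw [show (X 0 * X 2 - X 3 * X 5 : R6) = -(phi1 (X 1 ^ 2 - X 4 ^ 2)) by rw [eB1]; ring]
      exact neg_mem (Submodule.subset_span ⟨_, by simp, rfl⟩)
    · rw [show (X 1 * X 3 - X 4 * X 0 : R6) = -(phi1 (X 2 ^ 2 - X 5 ^ 2)) by rw [eB2]; ring]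
      exact neg_mem (Submodule.subset_span ⟨_, by simp, rfl⟩)
    · rw [show (X 2 * X 4 - X 5 * X 1 : R6) = phi1 (X 0 ^ 2 - X 3 ^ 2) from eB0.symm]
      exact Submodule.subset_span ⟨_, by simp, rfl⟩

lemma injB : ∀ v ∈ V0m, phi1 v = 0 → v = 0 := by
  intro v hv h0
  have key : (psi1 ∘ₗ phi1) v = (LinearMap.id : R6 →ₗ[ℂ] R6) v := by
    refine LinearMap.eqOn_span ?_ hv
    intro x hx
    simp only [Set.mem_insert_iff, Set.mem_singleton_iff] at hx
    rcases hx with rfl | rfl | rfl <;>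
      simp only [LinearMap.comp_apply, LinearMap.id_apply, map_sub,
        a0, a1, a2, a3, a4, a5, b0, b1, b2, b3, b4, b5]
  simpa [h0] using key.symm

lemma shB : ∀ v ∈ V0m, phi1 (Sh v) = Sh (phi1 v) := by
  intro v hv
  have key : (phi1 ∘ₗ Sh.toLinearMap) v = (Sh.toLinearMap ∘ₗ phi1) v := by
    refine LinearMap.eqOn_span ?_ hv
    intro x hx
    simp only [Set.mem_insert_iff, Set.mem_singleton_iff] at hx
    rcases hx with rfl | rfl | rfl <;>
      simp only [LinearMap.comp_apply, AlgHom.toLinearMap_apply, map_sub, map_pow, map_mul,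
        sh0, sh1, sh2, sh3, sh4, sh5, a0, a1, a2, a3, a4, a5]
  simpa using key

lemma twB : ∀ v ∈ V0m, phi1 (Tw v) = Tw (phi1 v) := by
  intro v hv
  have key : (phi1 ∘ₗ Tw.toLinearMap) v = (Tw.toLinearMap ∘ₗ phi1) v := by
    refine LinearMap.eqOn_span ?_ hv
    intro x hx
    simp only [Set.mem_insert_iff, Set.mem_singleton_iff] at hx
    rcases hx with rfl | rfl | rfl <;>
    · simp only [LinearMap.comp_apply, AlgHom.toLinearMap_apply, map_sub, map_pow, map_mul,
        map_smul, tw0, tw1, tw2, tw3, tw4, tw5, smul_pow, smul_mul_assoc, mul_smul_comm,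
        smul_smul, a0, a1, a2, a3, a4, a5]
      match_scalars
      all_goals ring_nf
      all_goals try simp only [hε6, hε7, hε8, hε9, hε10, hε11]
      all_goals try ring
  simpa using key

lemma eC0 : phi2 (X 0 * X 1 + X 3 * X 4) = X 2 * X 5 := by
  rw [map_add, c0, c3, ← add_smul]; norm_num
lemma eC1 : phi2 (X 1 * X 2 + X 4 * X 5) = X 3 * X 0 := by
  rw [map_add, c1, c4, ← add_smul]; norm_num
lemma eC2 : phi2 (X 2 * X 3 + X 5 * X 0) = X 4 * X 1 := by
  rw [map_add, c2, c5, ← add_smul]; norm_num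

lemma imgC : Submodule.map phi2 V1p = V3 := by
  rw [V1p, V3, Submodule.map_span]
  refine le_antisymm (Submodule.span_le.2 ?_) (Submodule.span_le.2 ?_)
  · rintro x ⟨y, hy, rfl⟩
    simp only [Set.mem_insert_iff, Set.mem_singleton_iff] at hy
    rcases hy with rfl | rfl | rfl
    · rw [eC0]
      exact Submodule.subset_span (by right; right; rfl)
    · rw [eC1]
      exact Submodule.subset_span (by left; ring)
    · rw [eC2]
      exact Submodule.subset_span (by right; left; ring)
  · intro x hx
    simp only [Set.mem_insert_iff, Set.mem_singleton_iff] at hx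
    rcases hx with rfl | rfl | rfl
    · rw [show (X 0 * X 3 : R6) = phi2 (X 1 * X 2 + X 4 * X 5) by rw [eC1]; ring]
      exact Submodule.subset_span ⟨_, by simp, rfl⟩
    · rw [show (X 1 * X 4 : R6) = phi2 (X 2 * X 3 + X 5 * X 0) by rw [eC2]; ring]
      exact Submodule.subset_span ⟨_, by simp, rfl⟩
    · rw [show (X 2 * X 5 : R6) = phi2 (X 0 * X 1 + X 3 * X 4) from eC0.symm]
      exact Submodule.subset_span ⟨_, by simp, rfl⟩

lemma injC : ∀ v ∈ V1p, phi2 v = 0 → v = 0 := by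
  intro v hv h0
  have key : (psi2 ∘ₗ phi2) v = (LinearMap.id : R6 →ₗ[ℂ] R6) v := by
    refine LinearMap.eqOn_span ?_ hv
    intro x hx
    simp only [Set.mem_insert_iff, Set.mem_singleton_iff] at hx
    rcases hx with rfl | rfl | rfl <;>
      simp only [LinearMap.comp_apply, LinearMap.id_apply, eC0, eC1, eC2, d0, d1, d2]
  simpa [h0] using key.symm

lemma shC : ∀ v ∈ V1p, phi2 (Sh v) = Sh (phi2 v) := by
  intro v hv
  have key : (phi2 ∘ₗ Sh.toLinearMap) v = (Sh.toLinearMap ∘ₗ phi2) v := by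
    refine LinearMap.eqOn_span ?_ hv
    intro x hx
    simp only [Set.mem_insert_iff, Set.mem_singleton_iff] at hx
    rcases hx with rfl | rfl | rfl <;>
      simp only [LinearMap.comp_apply, AlgHom.toLinearMap_apply, map_add, map_mul, map_smul,
        sh0, sh1, sh2, sh3, sh4, sh5, c0, c1, c2, c3, c4, c5]
    all_goals ring_nf
  simpa using key

lemma twC : ∀ v ∈ V1p, phi2 (Tw v) = Tw (phi2 v) := by
  intro v hv
  have key : (phi2 ∘ₗ Tw.toLinearMap) v = (Tw.toLinearMap ∘ₗ phi2) v := by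
    refine LinearMap.eqOn_span ?_ hv
    intro x hx
    simp only [Set.mem_insert_iff, Set.mem_singleton_iff] at hx
    rcases hx with rfl | rfl | rfl <;>
    · simp only [LinearMap.comp_apply, AlgHom.toLinearMap_apply, map_add, map_mul,
        map_smul, tw0, tw1, tw2, tw3, tw4, tw5, smul_mul_assoc, mul_smul_comm,
        smul_smul, c0, c1, c2, c3, c4, c5]
      match_scalars
      all_goals ring_nf
      all_goals try simp only [hε6, hε7, hε8, hε9, hε10, hε11]
      all_goals try ring
  simpa using key

/-- There are `ℂ`-linear isomorphisms `V₀⁺ ≃ V₂⁺`, `V₀⁻ ≃ V₂⁻` and `V₁⁺ ≃ V₃`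
intertwining the `S`- and `T`-actions and sending the generators as specified. -/
theorem equivariant_isomorphisms_between_paired_subspaces :
    (∃ φ : R6 →ₗ[ℂ] R6,
      φ (X 0 ^ 2 + X 3 ^ 2) = X 2 * X 4 + X 5 * X 1 ∧
      φ (X 1 ^ 2 + X 4 ^ 2) = X 3 * X 5 + X 0 * X 2 ∧
      φ (X 2 ^ 2 + X 5 ^ 2) = X 4 * X 0 + X 1 * X 3 ∧
      IsEquivariantIso φ V0p V2p) ∧
    (∃ φ : R6 →ₗ[ℂ] R6,
      φ (X 0 ^ 2 - X 3 ^ 2) = X 2 * X 4 - X 5 * X 1 ∧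
      φ (X 1 ^ 2 - X 4 ^ 2) = X 3 * X 5 - X 0 * X 2 ∧
      φ (X 2 ^ 2 - X 5 ^ 2) = X 4 * X 0 - X 1 * X 3 ∧
      IsEquivariantIso φ V0m V2m) ∧
    (∃ φ : R6 →ₗ[ℂ] R6,
      φ (X 0 * X 1 + X 3 * X 4) = X 2 * X 5 ∧
      φ (X 1 * X 2 + X 4 * X 5) = X 3 * X 0 ∧
      φ (X 2 * X 3 + X 5 * X 0) = X 4 * X 1 ∧
      IsEquivariantIso φ V1p V3) := by
  refine ⟨⟨phi1, eA0, eA1, eA2, imgA, injA, shA, twA⟩,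
    ⟨phi1, eB0, eB1, eB2, imgB, injB, shB, twB⟩,
    ⟨phi2, eC0, eC1, eC2, imgC, injC, shC, twC⟩⟩
end
end

section
/- For every α, β ∈ ℂ, the cubics F₁ and F₂ satisfy S(F₁) = F₂, S(F₂) = F₁, T(F₁) = F₁ and T(F₂) = −F₂; in particular the span of {F₁, F₂} is invariant under S and T. -/
open MvPolynomial

noncomputable section

/-- The cubic `F₁`. -/
def F1 (α β : ℂ) : R6 :=
  C (2 * (α ^ 2 * β ^ 2 - α - β)) * (X 0 * X 2 * X 4)
    - C 2 * (X 0 ^ 3 + X 2 ^ 3 + X 4 ^ 3)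
    + C (2 * (β - α)) * (X 1 * X 2 * X 3 + X 3 * X 4 * X 5 + X 5 * X 0 * X 1)
    + C (α * β * (β - α)) * (X 0 * X 3 ^ 2 + X 2 * X 5 ^ 2 + X 4 * X 1 ^ 2)

/-- The cubic `F₂`. -/
def F2 (α β : ℂ) : R6 :=
  C (2 * (α ^ 2 * β ^ 2 - α - β)) * (X 1 * X 3 * X 5)
    - C 2 * (X 1 ^ 3 + X 3 ^ 3 + X 5 ^ 3)
    + C (2 * (β - α)) * (X 2 * X 3 * X 4 + X 4 * X 5 * X 0 + X 0 * X 1 * X 2)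
    + C (α * β * (β - α)) * (X 1 * X 4 ^ 2 + X 3 * X 0 ^ 2 + X 5 * X 2 ^ 2)


lemma eps3 : ε ^ 3 = -1 := by
  rw [ε, ← Complex.exp_nat_mul]
  rw [show (3:ℕ) * (2 * Real.pi * Complex.I / 6) = Real.pi * Complex.I by push_cast; ring]
  exact Complex.exp_pi_mul_I

lemma Ceps3 : (C ε : R6) ^ 3 = -1 := by rw [← C_pow, eps3, map_neg, map_one]
lemma Ceps6 : (C ε : R6) ^ 6 = 1 := by
  rw [show ((C ε : R6)) ^ 6 = ((C ε) ^ 3) ^ 2 by ring, Ceps3]; ring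
lemma Ceps9 : (C ε : R6) ^ 9 = -1 := by
  rw [show ((C ε : R6)) ^ 9 = ((C ε) ^ 3) ^ 3 by ring, Ceps3]; ring
lemma Ceps12 : (C ε : R6) ^ 12 = 1 := by
  rw [show ((C ε : R6)) ^ 12 = ((C ε) ^ 6) ^ 2 by ring, Ceps6]; ring
lemma Ceps15 : (C ε : R6) ^ 15 = -1 := by
  rw [show ((C ε : R6)) ^ 15 = ((C ε) ^ 3) ^ 5 by ring, Ceps3]; ring

set_option maxRecDepth 10000 in
lemma Sh_F1 (α β : ℂ) : Sh (F1 α β) = F2 α β := by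
  simp only [F1, F2, Sh, map_add, map_sub, map_mul, map_pow, aeval_X, aeval_C,
    show ((0:Fin 6)+1) = 1 from rfl, show ((1:Fin 6)+1) = 2 from rfl,
    show ((2:Fin 6)+1) = 3 from rfl, show ((3:Fin 6)+1) = 4 from rfl,
    show ((4:Fin 6)+1) = 5 from rfl, show ((5:Fin 6)+1) = 0 from rfl,
    algebraMap_eq]

set_option maxRecDepth 10000 in
lemma Sh_F2 (α β : ℂ) : Sh (F2 α β) = F1 α β := by
  simp only [F1, F2, Sh, map_add, map_sub, map_mul, map_pow, aeval_X, aeval_C,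
    show ((0:Fin 6)+1) = 1 from rfl, show ((1:Fin 6)+1) = 2 from rfl,
    show ((2:Fin 6)+1) = 3 from rfl, show ((3:Fin 6)+1) = 4 from rfl,
    show ((4:Fin 6)+1) = 5 from rfl, show ((5:Fin 6)+1) = 0 from rfl,
    algebraMap_eq]
  ring

set_option maxRecDepth 10000 in
lemma Tw_F1 (α β : ℂ) : Tw (F1 α β) = F1 α β := by
  simp only [F1, Tw, map_add, map_sub, map_mul, map_pow, aeval_X, aeval_C,
    show ((0:Fin 6):ℕ) = 0 from rfl, show ((1:Fin 6):ℕ) = 1 from rfl,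
    show ((2:Fin 6):ℕ) = 2 from rfl, show ((3:Fin 6):ℕ) = 3 from rfl,
    show ((4:Fin 6):ℕ) = 4 from rfl, show ((5:Fin 6):ℕ) = 5 from rfl,
    algebraMap_eq]
  ring_nf
  rw [Ceps6, Ceps12]
  ring

set_option maxRecDepth 10000 in
lemma Tw_F2 (α β : ℂ) : Tw (F2 α β) = -F2 α β := by
  simp only [F2, Tw, map_add, map_sub, map_mul, map_pow, aeval_X, aeval_C,
    show ((0:Fin 6):ℕ) = 0 from rfl, show ((1:Fin 6):ℕ) = 1 from rfl,
    show ((2:Fin 6):ℕ) = 2 from rfl, show ((3:Fin 6):ℕ) = 3 from rfl,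
    show ((4:Fin 6):ℕ) = 4 from rfl, show ((5:Fin 6):ℕ) = 5 from rfl,
    algebraMap_eq]
  ring_nf
  rw [Ceps3, Ceps9, Ceps15]
  ring

/-- `S F₁ = F₂`, `S F₂ = F₁`, `T F₁ = F₁`, `T F₂ = −F₂`; in particular the span of
`{F₁, F₂}` is invariant under `S` and `T`. -/
theorem heisenberg_action_on_cubics (α β : ℂ) :
    Sh (F1 α β) = F2 α β ∧ Sh (F2 α β) = F1 α β ∧
    Tw (F1 α β) = F1 α β ∧ Tw (F2 α β) = -F2 α β ∧
    Submodule.map Sh.toLinearMap (Submodule.span ℂ {F1 α β, F2 α β}) ≤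
      Submodule.span ℂ {F1 α β, F2 α β} ∧
    Submodule.map Tw.toLinearMap (Submodule.span ℂ {F1 α β, F2 α β}) ≤
      Submodule.span ℂ {F1 α β, F2 α β} := by
  refine ⟨Sh_F1 α β, Sh_F2 α β, Tw_F1 α β, Tw_F2 α β, ?_, ?_⟩
  · rw [Submodule.map_le_iff_le_comap, Submodule.span_le]
    rintro p (rfl | rfl) <;> simp only [SetLike.mem_coe, Submodule.mem_comap,
      AlgHom.toLinearMap_apply, Sh_F1, Sh_F2]
    · exact Submodule.subset_span (Or.inr rfl)
    · exact Submodule.subset_span (Or.inl rfl)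
  · rw [Submodule.map_le_iff_le_comap, Submodule.span_le]
    rintro p (rfl | rfl) <;> simp only [SetLike.mem_coe, Submodule.mem_comap,
      AlgHom.toLinearMap_apply, Tw_F1, Tw_F2]
    · exact Submodule.subset_span (Or.inl rfl)
    · exact Submodule.neg_mem _ (Submodule.subset_span (Or.inr rfl))
end
end
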